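/- Let E be a real normed vector space of finite dimension m ≥ 1, let B = closedBall(c,R) with R > 0, let σ ∈ (0,1], k ≥ 1, and δ > 0. Let y_1,…,y_k ∈ E be fixed points and let μ be a probability measure on E^k (tuples x = (x_1,…,x_k)) such that each coordinate marginal of μ is σ-smooth with respect to B. Then μ{x : ∃ i,j ∈ {1,…,k}, ‖x_j − y_i‖ ≤ δ} ≤ (k²/σ)·(δ/R)^m; in particular, for δ = R·(σ/(2k²))^{1/m} this probability is at most 1/2. -/

import Mathlib

open MeasureTheory Metric

/-- A probability measure `μ` on `E` is `σ`-smooth with respect to the closed ball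
`B = closedBall c R` (relative to a Haar measure `vol` on `E`) if `μ` is supported on `B`
and `μ S ≤ vol S / (σ · vol B)` for every Borel set `S`. -/
def IsSmoothWrt {E : Type*} [MeasurableSpace E] [NormedAddCommGroup E]
    (vol μ : Measure E) (σ : ℝ) (c : E) (R : ℝ) : Prop :=
  μ (closedBall c R)ᶜ = 0 ∧
    ∀ S : Set E, MeasurableSet S →
      μ S ≤ vol S / (ENNReal.ofReal σ * vol (closedBall c R))

/-- per-step union bound in the proof of Lemma 3.3.
Let `E` be a real normed vector space of finite dimension `m ≥ 1`, `B = closedBall c R`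
with `R > 0`, `σ ∈ (0,1]`, `k ≥ 1`, `δ > 0`. Let `y 1, …, y k ∈ E` be fixed points and `μ`
a probability measure on `E^k` whose coordinate marginals are all `σ`-smooth with respect
to `B`. Then `μ {x | ∃ i j, ‖x j - y i‖ ≤ δ} ≤ (k²/σ)·(δ/R)^m`; in particular, for
`δ = R·(σ/(2k²))^{1/m}` this probability is at most `1/2`. -/
theorem smooth_tuple_near_points_prob_le
    {E : Type*} [NormedAddCommGroup E] [NormedSpace ℝ E]
    [MeasurableSpace E] [BorelSpace E] [FiniteDimensional ℝ E]
    {m : ℕ} (hm : 1 ≤ m) (hdim : Module.finrank ℝ E = m)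
    (vol : Measure E) [vol.IsAddHaarMeasure]
    (c : E) {R : ℝ} (hR : 0 < R) {σ : ℝ} (hσ0 : 0 < σ) (hσ1 : σ ≤ 1)
    {k : ℕ} (hk : 1 ≤ k) {δ : ℝ} (hδ : 0 < δ)
    (y : Fin k → E)
    (μ : Measure (Fin k → E)) [IsProbabilityMeasure μ]
    (hmarg : ∀ j : Fin k, IsSmoothWrt vol (μ.map fun x => x j) σ c R) :
    μ {x | ∃ i j : Fin k, dist (x j) (y i) ≤ δ} ≤
        ENNReal.ofReal (((k : ℝ) ^ 2 / σ) * (δ / R) ^ m) ∧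
      (δ = R * (σ / (2 * (k : ℝ) ^ 2)) ^ ((1 : ℝ) / m) →
        μ {x | ∃ i j : Fin k, dist (x j) (y i) ≤ δ} ≤ 1 / 2) := by

  have hk0 : (k:ℝ) ≠ 0 := by positivity
  have hσ0' : σ ≠ 0 := hσ0.ne'
  have hR0 : R ≠ 0 := hR.ne'
  have hm0 : (m:ℝ) ≠ 0 := by exact_mod_cast Nat.one_le_iff_ne_zero.mp hm
  have hf : ∀ j : Fin k, Measurable fun x : Fin k → E => x j := fun j => measurable_pi_apply j
  have hV0 : vol (ball (0:E) 1) ≠ 0 := (measure_ball_pos vol 0 one_pos).ne'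
  have hVt : vol (ball (0:E) 1) ≠ ⊤ := measure_ball_lt_top.ne
  have key : ∀ i j : Fin k, μ {x | dist (x j) (y i) ≤ δ} ≤ ENNReal.ofReal (δ^m / (σ * R^m)) := by
    intro i j
    have h1 : μ {x | dist (x j) (y i) ≤ δ} = (μ.map fun x => x j) (closedBall (y i) δ) := by
      rw [Measure.map_apply (hf j) measurableSet_closedBall]
      rfl
    rw [h1]
    calc (μ.map fun x => x j) (closedBall (y i) δ)
        ≤ vol (closedBall (y i) δ) / (ENNReal.ofReal σ * vol (closedBall c R)) :=
          (hmarg j).2 _ measurableSet_closedBall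
      _ = ENNReal.ofReal (δ^m / (σ * R^m)) := by
          rw [Measure.addHaar_closedBall vol (y i) hδ.le,
              Measure.addHaar_closedBall vol c hR.le, hdim,
              show ENNReal.ofReal σ * (ENNReal.ofReal (R^m) * vol (ball (0:E) 1))
                = (ENNReal.ofReal σ * ENNReal.ofReal (R^m)) * vol (ball (0:E) 1) from
                (mul_assoc _ _ _).symm,
              ENNReal.mul_div_mul_right _ _ hV0 hVt,
              ← ENNReal.ofReal_mul hσ0.le,
              ENNReal.ofReal_div_of_pos (by positivity)]
  have hset : {x : Fin k → E | ∃ i j : Fin k, dist (x j) (y i) ≤ δ}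
      = ⋃ i, ⋃ j, {x : Fin k → E | dist (x j) (y i) ≤ δ} := by
    ext x; simp
  have hmain : μ {x | ∃ i j : Fin k, dist (x j) (y i) ≤ δ}
      ≤ (k:ENNReal)^2 * ENNReal.ofReal (δ^m / (σ * R^m)) := by
    rw [hset]
    calc μ (⋃ i, ⋃ j, {x : Fin k → E | dist (x j) (y i) ≤ δ})
        ≤ ∑ i : Fin k, μ (⋃ j, {x : Fin k → E | dist (x j) (y i) ≤ δ}) :=
          measure_iUnion_fintype_le _ _
      _ ≤ ∑ i : Fin k, ∑ j : Fin k, μ {x : Fin k → E | dist (x j) (y i) ≤ δ} :=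
          Finset.sum_le_sum fun i _ => measure_iUnion_fintype_le _ _
      _ ≤ ∑ _i : Fin k, ∑ _j : Fin k, ENNReal.ofReal (δ^m / (σ * R^m)) :=
          Finset.sum_le_sum fun i _ => Finset.sum_le_sum fun j _ => key i j
      _ = (k:ENNReal)^2 * ENNReal.ofReal (δ^m / (σ * R^m)) := by
          simp [Finset.sum_const, sq]
          ring
  have hconv : ENNReal.ofReal (((k : ℝ) ^ 2 / σ) * (δ / R) ^ m)
      = (k:ENNReal)^2 * ENNReal.ofReal (δ^m / (σ * R^m)) := by
    have h : ((k : ℝ) ^ 2 / σ) * (δ / R) ^ m = (k:ℝ)^2 * (δ^m / (σ * R^m)) := by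
      field_simp
      rw [← mul_pow, div_mul_cancel₀ _ hR0]
    rw [h, ENNReal.ofReal_mul (by positivity)]
    congr 1
    rw [ENNReal.ofReal_pow (by positivity), ENNReal.ofReal_natCast]
  constructor
  · rw [hconv]; exact hmain
  · intro hδeq
    have hpow : ((δ : ℝ) / R) ^ m = σ / (2 * (k:ℝ)^2) := by
      have hx : (0:ℝ) ≤ σ / (2 * (k:ℝ)^2) := by positivity
      rw [hδeq, mul_comm, mul_div_assoc, div_self hR0, mul_one,
        ← Real.rpow_natCast ((σ / (2 * (k:ℝ)^2)) ^ ((1:ℝ)/m)) m,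
        ← Real.rpow_mul hx, one_div, inv_mul_cancel₀ hm0, Real.rpow_one]
    have hval : ((k : ℝ) ^ 2 / σ) * (δ / R) ^ m = 1/2 := by
      rw [hpow]; field_simp
    calc μ {x | ∃ i j : Fin k, dist (x j) (y i) ≤ δ}
        ≤ ENNReal.ofReal (((k : ℝ) ^ 2 / σ) * (δ / R) ^ m) := by rw [hconv]; exact hmain
      _ = 1/2 := by
          rw [hval, ENNReal.ofReal_div_of_pos two_pos, ENNReal.ofReal_one, (by norm_num : ENNReal.ofReal 2 = 2)]
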